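/- Let k ≥ 1 and let r be the smallest integer with C(r,2) ≥ k. Let A ∈ F_q^{k×r} be a matrix whose rows are k distinct 0-1 vectors of Hamming weight 2 (viewed in F_q^r). Then the matrix G = (I_k | A) ∈ F_q^{k×(k+r)} satisfies the 3-all-symbol PIR property. -/

import Mathlib

open Matrix

/-- `G` serves the list of vectors `v` (indexed by `ι`) if there are pairwise disjoint
recovery sets `R i` of column indices with `v i` in the span of the columns indexed by `R i`. -/
def Serves (F : Type*) [Field F] {m n ι : Type*} (G : Matrix m n F) (v : ι → (m → F)) : Prop :=
  ∃ R : ι → Set n, (Pairwise fun a b => Disjoint (R a) (R b)) ∧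
    ∀ i, v i ∈ Submodule.span F ((fun j a => G a j) '' R i)

/-- the `t`-all-symbol PIR property. -/
def ASPIR (F : Type*) [Field F] {m n : Type*} (t : ℕ) (G : Matrix m n F) : Prop :=
  ∀ j : n, Serves F G fun _ : Fin t => fun a => G a j

/-- the `t`-all-symbol batch property. -/
def ASBatch (F : Type*) [Field F] {m n : Type*} (t : ℕ) (G : Matrix m n F) : Prop :=
  ∀ c : Fin t → n, Serves F G fun i => fun a => G a (c i)

theorem stmt9 {F : Type*} [Field F] {k r : ℕ} (hk : 1 ≤ k)
    (A : Matrix (Fin k) (Fin r) F)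
    (hrows : ∀ i, ∃ a b : Fin r, a ≠ b ∧ ∀ j, A i j = if j = a ∨ j = b then 1 else 0)
    (hdist : Function.Injective fun i => fun j => A i j)
    (hr : IsLeast {r' : ℕ | k ≤ r'.choose 2} r) :
    ASPIR F 3 (Matrix.fromCols (1 : Matrix (Fin k) (Fin k) F) A) := by 
  classical
  set G := Matrix.fromCols (1 : Matrix (Fin k) (Fin k) F) A with hGdef
  set cols : (Fin k ⊕ Fin r) → (Fin k → F) := fun j a => G a j with hcolsdef
  set e : Fin k → (Fin k → F) := fun i x => if x = i then 1 else 0 with hedef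
  have hzo : ∀ i a, A i a = 0 ∨ A i a = 1 := by
    intro i a
    obtain ⟨p, q, hpq, h⟩ := hrows i
    rw [h a]; split <;> simp
  have hone : ∀ i a, A i a ≠ 0 → A i a = 1 := fun i a h => (hzo i a).resolve_left h
  have hpairmem : ∀ i a b, a ≠ b → A i a ≠ 0 → A i b ≠ 0 →
      ∀ j, A i j = if j = a ∨ j = b then 1 else 0 := by
    intro i a b hab ha hb j
    obtain ⟨p, q, hpq, h⟩ := hrows i
    have ha' : a = p ∨ a = q := by
      by_contra hc; push_neg at hc; rw [h a] at ha; simp [hc.1, hc.2] at ha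
    have hb' : b = p ∨ b = q := by
      by_contra hc; push_neg at hc; rw [h b] at hb; simp [hc.1, hc.2] at hb
    rcases ha' with rfl | rfl <;> rcases hb' with rfl | rfl
    · exact absurd rfl hab
    · exact h j
    · rw [h j]; by_cases h1 : j = a <;> by_cases h2 : j = b <;> simp [h1, h2]
    · exact absurd rfl hab
  have rows_eq : ∀ i i' a b, a ≠ b → A i a ≠ 0 → A i b ≠ 0 → A i' a ≠ 0 → A i' b ≠ 0 →
      i = i' := by
    intro i i' a b hab h1 h2 h3 h4
    apply hdist
    funext j
    show A i j = A i' j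
    rw [hpairmem i a b hab h1 h2 j, hpairmem i' a b hab h3 h4 j]
  have colsl : ∀ i, cols (Sum.inl i) = e i := by
    intro i; funext x
    simp [hcolsdef, hGdef, hedef, Matrix.fromCols, Matrix.one_apply]
  have colsr : ∀ a, cols (Sum.inr a) = fun x => A x a := by
    intro a; funext x
    simp [hcolsdef, hGdef, Matrix.fromCols]
  -- column of A as sum of unit vectors
  have hC : ∀ a, cols (Sum.inr a)
      = ∑ i ∈ Finset.univ.filter (fun i => A i a ≠ 0), e i := by
    intro a; funext x
    rw [colsr, Finset.sum_apply]
    simp only [hedef]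
    rw [Finset.sum_ite_eq (Finset.univ.filter (fun i => A i a ≠ 0)) x (fun _ => (1 : F))]
    simp only [Finset.mem_filter, Finset.mem_univ, true_and]
    rcases hzo x a with h | h <;> simp [h]
  have hE : ∀ i a, A i a ≠ 0 → e i = cols (Sum.inr a)
      - ∑ i' ∈ Finset.univ.filter (fun i' => i' ≠ i ∧ A i' a ≠ 0), e i' := by
    intro i a hia; funext x
    rw [Pi.sub_apply, colsr, Finset.sum_apply]
    simp only [hedef]
    rw [Finset.sum_ite_eq (Finset.univ.filter (fun i' => i' ≠ i ∧ A i' a ≠ 0)) x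
      (fun _ => (1 : F))]
    simp only [Finset.mem_filter, Finset.mem_univ, true_and]
    by_cases hx : x = i
    · subst hx; simp [hone x a hia]
    · rcases hzo x a with h | h <;> simp [hx, h]
  -- the auxiliary recovery set
  set S : Fin k → Fin r → Set (Fin k ⊕ Fin r) := fun i a =>
    {s | s = Sum.inr a ∨ ∃ i', s = Sum.inl i' ∧ i' ≠ i ∧ A i' a ≠ 0} with hSdef
  have hM : ∀ i a, A i a ≠ 0 → e i ∈ Submodule.span F (cols '' S i a) := by
    intro i a hia
    rw [hE i a hia]
    refine Submodule.sub_mem _ (Submodule.subset_span ⟨_, Or.inl rfl, rfl⟩)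
      (Submodule.sum_mem _ ?_)
    intro i' hi'
    simp only [Finset.mem_filter, Finset.mem_univ, true_and] at hi'
    rw [← colsl]
    exact Submodule.subset_span ⟨_, Or.inr ⟨i', rfl, hi'⟩, rfl⟩
  have hDl : ∀ i a, Disjoint ({Sum.inl i} : Set (Fin k ⊕ Fin r)) (S i a) := by
    intro i a
    rw [Set.disjoint_left]
    rintro s rfl (h | ⟨i', h, hne, -⟩)
    · exact Sum.inl_ne_inr h
    · exact hne (Sum.inl.inj h).symm
  have hDr : ∀ i a b, a ≠ b → A i a ≠ 0 → A i b ≠ 0 → Disjoint (S i a) (S i b) := by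
    intro i a b hab hia0 hib0
    rw [Set.disjoint_left]
    rintro s (rfl | ⟨i', rfl, hne, hia⟩)
    · rintro (h | ⟨i', h, -, -⟩)
      · exact hab (Sum.inr.inj h)
      · exact Sum.inr_ne_inl h
    · rintro (h | ⟨i'', h, hne', hib⟩)
      · exact Sum.inl_ne_inr h
      · obtain rfl : i' = i'' := Sum.inl.inj h
        exact hne (rows_eq i' i a b hab hia hib hia0 hib0)
  intro j
  rcases j with i | a
  · -- systematic column
    obtain ⟨a, b, hab, hA⟩ := hrows i
    have hia : A i a ≠ 0 := by rw [hA a]; simp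
    have hib : A i b ≠ 0 := by rw [hA b]; simp
    refine ⟨![{Sum.inl i}, S i a, S i b], ?_, ?_⟩
    · intro x y hxy
      fin_cases x <;> fin_cases y <;>
        simp only [Fin.isValue, Matrix.cons_val_zero, Matrix.cons_val_one, Matrix.head_cons,
          Matrix.cons_val_two, Matrix.tail_cons] <;>
        first
          | exact absurd rfl hxy
          | exact hDl i a
          | exact hDl i b
          | exact (hDl i a).symm
          | exact (hDl i b).symm
          | exact hDr i a b hab hia hib
          | exact (hDr i a b hab hia hib).symm
    · intro t
      fin_cases t
      · exact Submodule.subset_span ⟨Sum.inl i, rfl, rfl⟩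
      · show cols (Sum.inl i) ∈ Submodule.span F (cols '' S i a)
        rw [colsl i]
        exact hM i a hia
      · show cols (Sum.inl i) ∈ Submodule.span F (cols '' S i b)
        rw [colsl i]
        exact hM i b hib
  · -- parity column
    set T : Set (Fin k ⊕ Fin r) :=
      {s | (∃ b, s = Sum.inr b ∧ b ≠ a) ∨ ∃ i, s = Sum.inl i ∧ A i a = 0} with hTdef
    have hD01 : Disjoint ({Sum.inr a} : Set (Fin k ⊕ Fin r))
        {s | ∃ i, s = Sum.inl i ∧ A i a ≠ 0} := by
      rw [Set.disjoint_left]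
      rintro s rfl ⟨i, h, -⟩
      exact Sum.inr_ne_inl h
    have hD02 : Disjoint ({Sum.inr a} : Set (Fin k ⊕ Fin r)) T := by
      rw [Set.disjoint_left]
      rintro s rfl (⟨b, h, hba⟩ | ⟨i, h, -⟩)
      · exact hba (Sum.inr.inj h).symm
      · exact Sum.inr_ne_inl h
    have hD12 : Disjoint {s | ∃ i, s = Sum.inl i ∧ A i a ≠ 0} T := by
      rw [Set.disjoint_left]
      rintro s ⟨i, rfl, hia⟩ (⟨b, h, -⟩ | ⟨i', h, h0⟩)
      · exact Sum.inl_ne_inr h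
      · exact hia ((Sum.inl.inj h) ▸ h0)
    refine ⟨![{Sum.inr a}, {s | ∃ i, s = Sum.inl i ∧ A i a ≠ 0}, T], ?_, ?_⟩
    · intro x y hxy
      fin_cases x <;> fin_cases y <;>
        simp only [Fin.isValue, Matrix.cons_val_zero, Matrix.cons_val_one, Matrix.head_cons,
          Matrix.cons_val_two, Matrix.tail_cons] <;>
        first
          | exact absurd rfl hxy
          | exact hD01
          | exact hD02
          | exact hD12
          | exact hD01.symm
          | exact hD02.symm
          | exact hD12.symm
    · intro t
      fin_cases t
      · exact Submodule.subset_span ⟨Sum.inr a, rfl, rfl⟩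
      · show cols (Sum.inr a) ∈
          Submodule.span F (cols '' {s | ∃ i, s = Sum.inl i ∧ A i a ≠ 0})
        rw [hC a]
        refine Submodule.sum_mem _ ?_
        intro i hi
        simp only [Finset.mem_filter, Finset.mem_univ, true_and] at hi
        rw [← colsl i]
        exact Submodule.subset_span ⟨Sum.inl i, ⟨i, rfl, hi⟩, rfl⟩
      · show cols (Sum.inr a) ∈ Submodule.span F (cols '' T)
        rw [hC a]
        refine Submodule.sum_mem _ ?_
        intro i hi
        simp only [Finset.mem_filter, Finset.mem_univ, true_and] at hi
        have key : ∃ b, b ≠ a ∧ A i b ≠ 0 := by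
          obtain ⟨p, q, hpq, hA⟩ := hrows i
          have ha' : a = p ∨ a = q := by
            by_contra hc; push_neg at hc; rw [hA a] at hi; simp [hc.1, hc.2] at hi
          rcases ha' with h | h
          · exact ⟨q, by rw [h]; exact hpq.symm, by rw [hA q]; simp⟩
          · exact ⟨p, by rw [h]; exact hpq, by rw [hA p]; simp⟩
        obtain ⟨b, hba, hb⟩ := key
        have hsub : S i b ⊆ T := by
          rintro s (rfl | ⟨i'', rfl, hne'', hib''⟩)
          · exact Or.inl ⟨b, rfl, hba⟩
          · refine Or.inr ⟨i'', rfl, ?_⟩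
            by_contra h0
            exact hne'' (rows_eq i'' i a b (Ne.symm hba) h0 hib'' hi hb)
        exact Submodule.span_mono (Set.image_mono (f := cols) hsub) (hM i b hb)
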